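/- For t > 0 and the function g_c(t,y) = I_0(√(t²−y²))/2 + ((t+y)/(2√(t²−y²))) I_1(√(t²−y²)) on |y| < t: lim_{y↑t} g_c(t,y) = (1+t)/2 and lim_{y↓−t} g_c(t,y) = 1/2, and moreover ∫_{−t}^{t} g_c(t,y) dy + 1 = e^{t}. -/

import Mathlib

open Real Filter


/-- Modified Bessel function of the first kind, order 0. -/
noncomputable def besselI0 (r : ℝ) : ℝ :=
  ∑' k : ℕ, (r / 2) ^ (2 * k) / ((Nat.factorial k : ℝ)) ^ 2

/-- Bessel function of the first kind, order 0. -/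
noncomputable def besselJ0 (r : ℝ) : ℝ :=
  ∑' k : ℕ, (-1 : ℝ) ^ k * (r / 2) ^ (2 * k) / ((Nat.factorial k : ℝ)) ^ 2

/-- Modified Bessel function of the first kind, order 1. -/
noncomputable def besselI1 (r : ℝ) : ℝ :=
  ∑' k : ℕ, (r / 2) ^ (2 * k + 1) / ((Nat.factorial k : ℝ) * (Nat.factorial (k + 1)))

/-- Bessel function of the first kind, order 1. -/
noncomputable def besselJ1 (r : ℝ) : ℝ :=
  ∑' k : ℕ, (-1 : ℝ) ^ k * (r / 2) ^ (2 * k + 1) / ((Nat.factorial k : ℝ) * (Nat.factorial (k + 1)))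

/-- Modified Bessel function of the first kind, order 2. -/
noncomputable def besselI2 (r : ℝ) : ℝ :=
  ∑' k : ℕ, (r / 2) ^ (2 * k + 2) / ((Nat.factorial k : ℝ) * (Nat.factorial (k + 2)))

/-- Bessel function of the first kind, order 2. -/
noncomputable def besselJ2 (r : ℝ) : ℝ :=
  ∑' k : ℕ, (-1 : ℝ) ^ k * (r / 2) ^ (2 * k + 2) / ((Nat.factorial k : ℝ) * (Nat.factorial (k + 2)))

section
open Topology MeasureTheory

namespace TG

noncomputable def A (s : ℝ) : ℝ := ∑' k : ℕ, s ^ k / (4 ^ k * (Nat.factorial k : ℝ) ^ 2)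
noncomputable def B (s : ℝ) : ℝ :=
  ∑' k : ℕ, s ^ k / (4 ^ k * ((Nat.factorial k : ℝ) * (Nat.factorial (k + 1))))

lemma one_le_fac (k : ℕ) : (1 : ℝ) ≤ (Nat.factorial k : ℝ) := by
  exact_mod_cast Nat.one_le_iff_ne_zero.2 (Nat.factorial_ne_zero k)

lemma fac_le_A (k : ℕ) : (Nat.factorial k : ℝ) ≤ 4 ^ k * (Nat.factorial k : ℝ) ^ 2 := by
  have h1 := one_le_fac k
  have h4 : (1 : ℝ) ≤ 4 ^ k := one_le_pow₀ (by norm_num)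
  nlinarith

lemma fac_le_B (k : ℕ) :
    (Nat.factorial k : ℝ) ≤ 4 ^ k * ((Nat.factorial k : ℝ) * (Nat.factorial (k + 1))) := by
  have h1 := one_le_fac (k + 1)
  have h0 := one_le_fac k
  have h4 : (1 : ℝ) ≤ 4 ^ k := one_le_pow₀ (by norm_num)
  nlinarith [mul_le_mul_of_nonneg_left h1 (le_trans zero_le_one h0)]

lemma summable_aux (s : ℝ) (c : ℕ → ℝ) (hc : ∀ k, (Nat.factorial k : ℝ) ≤ c k) :
    Summable (fun k : ℕ => s ^ k / c k) := by
  apply Summable.of_norm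
  refine Summable.of_nonneg_of_le (fun k => norm_nonneg _) (fun k => ?_)
    (Real.summable_pow_div_factorial |s|)
  have hfk : (0:ℝ) < Nat.factorial k := by exact_mod_cast Nat.factorial_pos k
  have hck : (0:ℝ) < c k := lt_of_lt_of_le hfk (hc k)
  rw [norm_div, norm_pow, Real.norm_eq_abs, Real.norm_eq_abs, abs_of_pos hck]
  gcongr
  exact hc k

lemma summableA (s : ℝ) : Summable (fun k : ℕ => s ^ k / (4 ^ k * (Nat.factorial k : ℝ) ^ 2)) :=
  summable_aux s _ fac_le_A

lemma summableB (s : ℝ) :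
    Summable (fun k : ℕ => s ^ k / (4 ^ k * ((Nat.factorial k : ℝ) * (Nat.factorial (k + 1))))) :=
  summable_aux s _ fac_le_B

lemma A_zero : A 0 = 1 := by
  rw [A, tsum_eq_single 0 (by intro k hk; simp [zero_pow hk])]
  simp [Nat.factorial]

lemma B_zero : B 0 = 1 := by
  rw [B, tsum_eq_single 0 (by intro k hk; simp [zero_pow hk])]
  simp [Nat.factorial]

lemma besselI0_sqrt {s : ℝ} (hs : 0 ≤ s) : besselI0 (Real.sqrt s) = A s := by
  rw [besselI0, A]
  refine tsum_congr fun k => ?_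
  have : (Real.sqrt s / 2) ^ (2 * k) = s ^ k / 4 ^ k := by
    rw [pow_mul, div_pow, Real.sq_sqrt hs, ← div_pow]
    norm_num
  rw [this, div_div]

lemma besselI1_sqrt {s : ℝ} (hs : 0 ≤ s) : besselI1 (Real.sqrt s) = Real.sqrt s / 2 * B s := by
  rw [besselI1, B, ← tsum_mul_left]
  refine tsum_congr fun k => ?_
  have h : (Real.sqrt s / 2) ^ (2 * k + 1) = Real.sqrt s / 2 * (s ^ k / 4 ^ k) := by
    rw [pow_succ, pow_mul, div_pow, Real.sq_sqrt hs, ← div_pow]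
    ring
  rw [h, mul_div_assoc, div_div]

lemma contA (R : ℝ) : ContinuousOn A (Set.Icc (-R) R) := by
  apply continuousOn_tsum (u := fun k => |R| ^ k / (Nat.factorial k : ℝ))
  · intro k; fun_prop
  · exact Real.summable_pow_div_factorial _
  · intro k x hx
    have hfk : (0:ℝ) < Nat.factorial k := by exact_mod_cast Nat.factorial_pos k
    have hck : (0:ℝ) < 4 ^ k * (Nat.factorial k : ℝ)^2 := lt_of_lt_of_le hfk (fac_le_A k)
    rw [norm_div, norm_pow, Real.norm_eq_abs, Real.norm_eq_abs, abs_of_pos hck]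
    have hxR : |x| ≤ |R| := le_trans (abs_le.2 ⟨hx.1, hx.2⟩) (le_abs_self R)
    gcongr
    exact fac_le_A k

lemma contB (R : ℝ) : ContinuousOn B (Set.Icc (-R) R) := by
  apply continuousOn_tsum (u := fun k => |R| ^ k / (Nat.factorial k : ℝ))
  · intro k; fun_prop
  · exact Real.summable_pow_div_factorial _
  · intro k x hx
    have hfk : (0:ℝ) < Nat.factorial k := by exact_mod_cast Nat.factorial_pos k
    have hck : (0:ℝ) < 4 ^ k * ((Nat.factorial k : ℝ) * (Nat.factorial (k+1))) :=
      lt_of_lt_of_le hfk (fac_le_B k)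
    rw [norm_div, norm_pow, Real.norm_eq_abs, Real.norm_eq_abs, abs_of_pos hck]
    have hxR : |x| ≤ |R| := le_trans (abs_le.2 ⟨hx.1, hx.2⟩) (le_abs_self R)
    gcongr
    exact fac_le_B k

lemma g_eq (t y : ℝ) (h : y ^ 2 < t ^ 2) :
    besselI0 (Real.sqrt (t ^ 2 - y ^ 2)) / 2 +
        (t + y) / (2 * Real.sqrt (t ^ 2 - y ^ 2)) * besselI1 (Real.sqrt (t ^ 2 - y ^ 2)) =
      A (t ^ 2 - y ^ 2) / 2 + (t + y) / 4 * B (t ^ 2 - y ^ 2) := by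
  have hs : (0:ℝ) < t ^ 2 - y ^ 2 := by linarith
  have hr : (0:ℝ) < Real.sqrt (t ^ 2 - y ^ 2) := Real.sqrt_pos.2 hs
  rw [besselI0_sqrt hs.le, besselI1_sqrt hs.le]
  field_simp
  ring



lemma tendstoA {t : ℝ} (ht : 0 < t) {l : Filter ℝ}
    (hφ : Tendsto (fun y => t ^ 2 - y ^ 2) l (𝓝 0)) :
    Tendsto (fun y => A (t ^ 2 - y ^ 2)) l (𝓝 1) := by
  have hR : (0:ℝ) ∈ Set.Icc (-(t^2+1)) (t^2+1) := by constructor <;> nlinarith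
  have hmem : ∀ᶠ y in l, t ^ 2 - y ^ 2 ∈ Set.Icc (-(t^2+1)) (t^2+1) :=
    hφ (Icc_mem_nhds (by nlinarith) (by nlinarith))
  have hA : ContinuousWithinAt A (Set.Icc (-(t^2+1)) (t^2+1)) 0 :=
    (contA (t^2+1)) 0 hR
  have := hA.tendsto.comp (tendsto_nhdsWithin_iff.2 ⟨hφ, hmem⟩)
  rwa [A_zero] at this

lemma tendstoB {t : ℝ} (ht : 0 < t) {l : Filter ℝ}
    (hφ : Tendsto (fun y => t ^ 2 - y ^ 2) l (𝓝 0)) :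
    Tendsto (fun y => B (t ^ 2 - y ^ 2)) l (𝓝 1) := by
  have hR : (0:ℝ) ∈ Set.Icc (-(t^2+1)) (t^2+1) := by constructor <;> nlinarith
  have hmem : ∀ᶠ y in l, t ^ 2 - y ^ 2 ∈ Set.Icc (-(t^2+1)) (t^2+1) :=
    hφ (Icc_mem_nhds (by nlinarith) (by nlinarith))
  have hB : ContinuousWithinAt B (Set.Icc (-(t^2+1)) (t^2+1)) 0 :=
    (contB (t^2+1)) 0 hR
  have := hB.tendsto.comp (tendsto_nhdsWithin_iff.2 ⟨hφ, hmem⟩)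
  rwa [B_zero] at this

lemma limit_top {t : ℝ} (ht : 0 < t)
    (g : ℝ → ℝ → ℝ)
    (hg : ∀ t y : ℝ, g t y =
      besselI0 (Real.sqrt (t ^ 2 - y ^ 2)) / 2 +
        (t + y) / (2 * Real.sqrt (t ^ 2 - y ^ 2)) * besselI1 (Real.sqrt (t ^ 2 - y ^ 2))) :
    Tendsto (fun y : ℝ => g t y) (nhdsWithin t (Set.Iio t)) (𝓝 ((1 + t) / 2)) := by
  have hev : ∀ᶠ y in nhdsWithin t (Set.Iio t), y ∈ Set.Ioo (-t) t :=
    eventually_of_mem (Ioo_mem_nhdsLT_of_mem ⟨by linarith, le_refl t⟩) (fun y hy => hy)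
  have hφ : Tendsto (fun y : ℝ => t ^ 2 - y ^ 2) (nhdsWithin t (Set.Iio t)) (𝓝 0) := by
    have : Continuous fun y : ℝ => t ^ 2 - y ^ 2 := by fun_prop
    have h2 := (this.tendsto t).mono_left (nhdsWithin_le_nhds (s := Set.Iio t))
    simpa using h2
  have hlim : Tendsto (fun y : ℝ => A (t ^ 2 - y ^ 2) / 2 + (t + y) / 4 * B (t ^ 2 - y ^ 2))
      (nhdsWithin t (Set.Iio t)) (𝓝 ((1 + t) / 2)) := by
    have h1 := (tendstoA ht hφ).div_const 2
    have h2 : Tendsto (fun y : ℝ => (t + y) / 4) (nhdsWithin t (Set.Iio t)) (𝓝 ((t + t) / 4)) := by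
      have : Continuous fun y : ℝ => (t + y) / 4 := by fun_prop
      exact (this.tendsto t).mono_left nhdsWithin_le_nhds
    have h3 := h1.add (h2.mul (tendstoB ht hφ))
    have : (1:ℝ) / 2 + (t + t) / 4 * 1 = (1 + t) / 2 := by ring
    rwa [this] at h3
  refine hlim.congr' ?_
  filter_upwards [hev] with y hy
  rw [hg t y, g_eq t y (sq_lt_sq' hy.1 hy.2)]

lemma limit_bot {t : ℝ} (ht : 0 < t)
    (g : ℝ → ℝ → ℝ)
    (hg : ∀ t y : ℝ, g t y =
      besselI0 (Real.sqrt (t ^ 2 - y ^ 2)) / 2 +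
        (t + y) / (2 * Real.sqrt (t ^ 2 - y ^ 2)) * besselI1 (Real.sqrt (t ^ 2 - y ^ 2))) :
    Tendsto (fun y : ℝ => g t y) (nhdsWithin (-t) (Set.Ioi (-t))) (𝓝 (1 / 2)) := by
  have hev : ∀ᶠ y in nhdsWithin (-t) (Set.Ioi (-t)), y ∈ Set.Ioo (-t) t :=
    eventually_of_mem (Ioo_mem_nhdsGT_of_mem ⟨le_refl (-t), by linarith⟩) (fun y hy => hy)
  have hφ : Tendsto (fun y : ℝ => t ^ 2 - y ^ 2) (nhdsWithin (-t) (Set.Ioi (-t))) (𝓝 0) := by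
    have : Continuous fun y : ℝ => t ^ 2 - y ^ 2 := by fun_prop
    have h2 := (this.tendsto (-t)).mono_left (nhdsWithin_le_nhds (s := Set.Ioi (-t)))
    simpa using h2
  have hlim : Tendsto (fun y : ℝ => A (t ^ 2 - y ^ 2) / 2 + (t + y) / 4 * B (t ^ 2 - y ^ 2))
      (nhdsWithin (-t) (Set.Ioi (-t))) (𝓝 (1 / 2)) := by
    have h1 := (tendstoA ht hφ).div_const 2
    have h2 : Tendsto (fun y : ℝ => (t + y) / 4) (nhdsWithin (-t) (Set.Ioi (-t)))
        (𝓝 ((t + -t) / 4)) := by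
      have : Continuous fun y : ℝ => (t + y) / 4 := by fun_prop
      exact (this.tendsto (-t)).mono_left nhdsWithin_le_nhds
    have h3 := h1.add (h2.mul (tendstoB ht hφ))
    have : (1:ℝ) / 2 + (t + -t) / 4 * 1 = 1 / 2 := by ring
    rwa [this] at h3
  refine hlim.congr' ?_
  filter_upwards [hev] with y hy
  rw [hg t y, g_eq t y (sq_lt_sq' hy.1 hy.2)]

end TG


namespace TG3
variable {t : ℝ}

lemma ii_pow (t : ℝ) (k : ℕ) (a b : ℝ) :
    IntervalIntegrable (fun y : ℝ => (t ^ 2 - y ^ 2) ^ k) MeasureTheory.volume a b :=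
  (Continuous.intervalIntegrable (by fun_prop) a b)

lemma hasDeriv_base (t y : ℝ) : HasDerivAt (fun y : ℝ => t ^ 2 - y ^ 2) (-(2 * y)) y := by
  simpa using (hasDerivAt_pow 2 y).const_sub (t ^ 2)

lemma J_rec (t : ℝ) (k : ℕ) :
    (2 * (k:ℝ) + 3) * ∫ y in (-t)..t, (t ^ 2 - y ^ 2) ^ (k + 1) =
      2 * ((k:ℝ) + 1) * t ^ 2 * ∫ y in (-t)..t, (t ^ 2 - y ^ 2) ^ k := by
  have hderiv : ∀ y ∈ Set.uIcc (-t) t,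
      HasDerivAt (fun y : ℝ => y * (t ^ 2 - y ^ 2) ^ (k + 1))
        ((2 * (k:ℝ) + 3) * (t ^ 2 - y ^ 2) ^ (k + 1)
          - 2 * ((k:ℝ) + 1) * t ^ 2 * (t ^ 2 - y ^ 2) ^ k) y := by
    intro y _
    have h2 : HasDerivAt (fun y : ℝ => (t ^ 2 - y ^ 2) ^ (k + 1))
        (↑(k + 1) * (t ^ 2 - y ^ 2) ^ (k + 1 - 1) * -(2 * y)) y := (hasDeriv_base t y).pow (k + 1)
    simp only [Nat.add_sub_cancel] at h2
    have h3 : HasDerivAt (fun y : ℝ => id y * (t ^ 2 - y ^ 2) ^ (k + 1)) _ y := (hasDerivAt_id y).mul h2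
    simp only [id_eq] at h3
    convert h3 using 1
    push_cast
    ring
  have key := intervalIntegral.integral_eq_sub_of_hasDerivAt hderiv (Continuous.intervalIntegrable (by fun_prop) _ _)
  have hsplit : ∫ y in (-t)..t, ((2 * (k:ℝ) + 3) * (t ^ 2 - y ^ 2) ^ (k + 1)
      - 2 * ((k:ℝ) + 1) * t ^ 2 * (t ^ 2 - y ^ 2) ^ k)
      = (2 * (k:ℝ) + 3) * (∫ y in (-t)..t, (t ^ 2 - y ^ 2) ^ (k + 1))
        - 2 * ((k:ℝ) + 1) * t ^ 2 * ∫ y in (-t)..t, (t ^ 2 - y ^ 2) ^ k := by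
    rw [intervalIntegral.integral_sub ((ii_pow t (k+1) _ _).const_mul _) ((ii_pow t k _ _).const_mul _),
      intervalIntegral.integral_const_mul, intervalIntegral.integral_const_mul]
  rw [hsplit] at key
  simp only [sub_self, neg_sq, zero_pow, Nat.succ_ne_zero, ne_eq, not_false_iff, mul_zero,
    sub_zero] at key
  linarith [key]

lemma J_zero (t : ℝ) : ∫ y in (-t)..t, (t ^ 2 - y ^ 2) ^ 0 = 2 * t := by
  simp; ring

lemma J_val (t : ℝ) (k : ℕ) :
    ∫ y in (-t)..t, (t ^ 2 - y ^ 2) ^ k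
      = 2 * t ^ (2 * k + 1) * 4 ^ k * ((Nat.factorial k : ℝ)) ^ 2
          / (Nat.factorial (2 * k + 1)) := by
  induction k with
  | zero => simpa [Nat.factorial] using J_zero t
  | succ k ih =>
    have h3 : (2 * (k:ℝ) + 3) ≠ 0 := by positivity
    have hrec := J_rec t k
    rw [ih] at hrec
    have hJ : ∫ y in (-t)..t, (t ^ 2 - y ^ 2) ^ (k + 1)
        = 2 * ((k:ℝ) + 1) * t ^ 2 *
            (2 * t ^ (2 * k + 1) * 4 ^ k * ((Nat.factorial k : ℝ)) ^ 2
              / (Nat.factorial (2 * k + 1))) / (2 * (k:ℝ) + 3) := by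
      field_simp at hrec ⊢
      linarith [hrec]
    rw [hJ]
    have e1 : 2 * (k + 1) + 1 = (2 * k + 1) + 1 + 1 := by ring
    rw [e1, Nat.factorial_succ ((2*k+1)+1), Nat.factorial_succ (2*k+1), Nat.factorial_succ k]
    have hf : (0:ℝ) < (Nat.factorial (2*k+1) : ℝ) := by exact_mod_cast Nat.factorial_pos _
    have hfk : (0:ℝ) < (Nat.factorial k : ℝ) := by exact_mod_cast Nat.factorial_pos _
    push_cast
    field_simp
    ring

lemma Jodd (t : ℝ) (k : ℕ) : ∫ y in (-t)..t, y * (t ^ 2 - y ^ 2) ^ k = 0 := by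
  have hderiv : ∀ y ∈ Set.uIcc (-t) t,
      HasDerivAt (fun y : ℝ => -((t ^ 2 - y ^ 2) ^ (k + 1) / (2 * ((k:ℝ) + 1))))
        (y * (t ^ 2 - y ^ 2) ^ k) y := by
    intro y _
    have h2 : HasDerivAt (fun y : ℝ => (t ^ 2 - y ^ 2) ^ (k + 1))
        (↑(k + 1) * (t ^ 2 - y ^ 2) ^ (k + 1 - 1) * -(2 * y)) y := (hasDeriv_base t y).pow (k + 1)
    simp only [Nat.add_sub_cancel] at h2
    have h4 : HasDerivAt (fun y : ℝ => -((t ^ 2 - y ^ 2) ^ (k + 1) / (2 * ((k:ℝ) + 1)))) _ y :=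
      (h2.div_const (2 * ((k:ℝ) + 1))).neg
    convert h4 using 1
    have : ((k:ℝ) + 1) ≠ 0 := by positivity
    field_simp
    push_cast
    ring
  have key := intervalIntegral.integral_eq_sub_of_hasDerivAt hderiv (Continuous.intervalIntegrable (by fun_prop) _ _)
  simpa using key

end TG3

namespace TG

open MeasureTheory intervalIntegral

set_option maxHeartbeats 2000000 in
lemma mass {t : ℝ} (ht : 0 < t)
    (g : ℝ → ℝ → ℝ)
    (hg : ∀ t y : ℝ, g t y =
      besselI0 (Real.sqrt (t ^ 2 - y ^ 2)) / 2 +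
        (t + y) / (2 * Real.sqrt (t ^ 2 - y ^ 2)) * besselI1 (Real.sqrt (t ^ 2 - y ^ 2))) :
    (∫ y in (-t)..t, g t y) + 1 = Real.exp t := by
  have htt : (-t) ≤ t := by linarith
  set G : ℝ → ℝ := fun y => A (t ^ 2 - y ^ 2) / 2 + (t + y) / 4 * B (t ^ 2 - y ^ 2) with hG
  -- Step 1: replace g by G in the integral (a.e. equality)
  have hne : ∀ᵐ x : ℝ, x ≠ t := by
    rw [MeasureTheory.ae_iff]
    simpa using MeasureTheory.measure_singleton (α := ℝ) t
  have step1 : (∫ y in (-t)..t, g t y) = ∫ y in (-t)..t, G y := by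
    apply intervalIntegral.integral_congr_ae
    filter_upwards [hne] with x hx hmem
    rw [Set.uIoc_of_le htt] at hmem
    have hx2 : x ^ 2 < t ^ 2 := sq_lt_sq' hmem.1 (lt_of_le_of_ne hmem.2 hx)
    rw [hg t x, g_eq t x hx2]
  -- series terms
  set F : ℕ → ℝ → ℝ := fun k y =>
    (t ^ 2 - y ^ 2) ^ k / (4 ^ k * (Nat.factorial k : ℝ) ^ 2) / 2 +
      (t + y) / 4 * ((t ^ 2 - y ^ 2) ^ k /
        (4 ^ k * ((Nat.factorial k : ℝ) * (Nat.factorial (k + 1))))) with hF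
  have hFcont : ∀ k, Continuous (F k) := by
    intro k
    have h1 : (0:ℝ) < 4 ^ k * (Nat.factorial k : ℝ) ^ 2 :=
      lt_of_lt_of_le (by exact_mod_cast Nat.factorial_pos k) (fac_le_A k)
    have h2 : (0:ℝ) < 4 ^ k * ((Nat.factorial k : ℝ) * (Nat.factorial (k + 1))) :=
      lt_of_lt_of_le (by exact_mod_cast Nat.factorial_pos k) (fac_le_B k)
    fun_prop
  have htsumF : ∀ y : ℝ, ∑' k, F k y = G y := by
    intro y
    have hs1 : Summable fun k : ℕ =>
        (t ^ 2 - y ^ 2) ^ k / (4 ^ k * (Nat.factorial k : ℝ) ^ 2) / 2 :=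
      (summableA _).div_const 2
    have hs2 : Summable fun k : ℕ => (t + y) / 4 * ((t ^ 2 - y ^ 2) ^ k /
        (4 ^ k * ((Nat.factorial k : ℝ) * (Nat.factorial (k + 1))))) :=
      (summableB _).mul_left _
    rw [hF]
    rw [hs1.tsum_add hs2, tsum_div_const, tsum_mul_left]
    rfl
  -- integrability
  have hFint : ∀ k, IntegrableOn (F k) (Set.Ioc (-t) t) volume := fun k =>
    ((hFcont k).integrableOn_Ioc)
  -- norm bound
  have hFbound : ∀ k, ∀ y ∈ Set.Ioc (-t) t,
      ‖F k y‖ ≤ (1 + t) * ((t ^ 2) ^ k / (Nat.factorial k : ℝ)) := by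
    intro k y hy
    have hy1 : -t < y := hy.1
    have hy2 : y ≤ t := hy.2
    have hX0 : (0:ℝ) ≤ t ^ 2 - y ^ 2 := by nlinarith
    have hXT : t ^ 2 - y ^ 2 ≤ t ^ 2 := by nlinarith
    have hfk : (0:ℝ) < (Nat.factorial k : ℝ) := by exact_mod_cast Nat.factorial_pos k
    have hty : (0:ℝ) ≤ t + y := by linarith
    have hF0 : 0 ≤ F k y := by
      rw [hF]
      have h1 : (0:ℝ) < 4 ^ k * (Nat.factorial k : ℝ) ^ 2 :=
        lt_of_lt_of_le hfk (fac_le_A k)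
      have h2 : (0:ℝ) < 4 ^ k * ((Nat.factorial k : ℝ) * (Nat.factorial (k + 1))) :=
        lt_of_lt_of_le hfk (fac_le_B k)
      positivity
    rw [Real.norm_eq_abs, abs_of_nonneg hF0, hF]
    have hb1 : (t ^ 2 - y ^ 2) ^ k / (4 ^ k * (Nat.factorial k : ℝ) ^ 2) / 2
        ≤ (t ^ 2) ^ k / (Nat.factorial k : ℝ) / 2 := by
      gcongr
      all_goals first
        | exact fac_le_A k
        | exact hXT
        | linarith
        | positivity
    have hb2 : (t + y) / 4 * ((t ^ 2 - y ^ 2) ^ k /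
          (4 ^ k * ((Nat.factorial k : ℝ) * (Nat.factorial (k + 1)))))
        ≤ (2 * t) / 4 * ((t ^ 2) ^ k / (Nat.factorial k : ℝ)) := by
      gcongr
      all_goals first
        | exact fac_le_B k
        | exact hXT
        | linarith
        | positivity
    have hTk : (0:ℝ) ≤ (t ^ 2) ^ k / (Nat.factorial k : ℝ) := by positivity
    nlinarith [hb1, hb2]
  -- summability of integrals of norms
  have hFnorm_sum : Summable fun k => ∫ y in Set.Ioc (-t) t, ‖F k y‖ := by
    refine Summable.of_nonneg_of_le
      (fun k => integral_nonneg (fun y => norm_nonneg _)) (fun k => ?_)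
      (((Real.summable_pow_div_factorial (t ^ 2)).mul_left (1 + t)).mul_right (2 * t))
    have hle : ∫ y in Set.Ioc (-t) t, ‖F k y‖
        ≤ ∫ _y in Set.Ioc (-t) t, (1 + t) * ((t ^ 2) ^ k / (Nat.factorial k : ℝ)) := by
      apply setIntegral_mono_on ((hFint k).norm) (integrableOn_const (by
        rw [Real.volume_Ioc]; exact ENNReal.ofReal_ne_top)) measurableSet_Ioc
      exact hFbound k
    refine hle.trans ?_
    rw [setIntegral_const, Real.volume_real_Ioc_of_le (by linarith), smul_eq_mul]
    ring_nf
    nlinarith [pow_nonneg (sq_nonneg t) k,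
      (by exact_mod_cast Nat.factorial_pos k : (0:ℝ) < (Nat.factorial k : ℝ))]
  -- interchange
  have step2 : (∫ y in Set.Ioc (-t) t, G y) = ∑' k, ∫ y in Set.Ioc (-t) t, F k y := by
    rw [MeasureTheory.integral_tsum_of_summable_integral_norm hFint hFnorm_sum]
    apply MeasureTheory.integral_congr_ae
    filter_upwards with y
    exact (htsumF y).symm
  -- evaluate each term
  have step3 : ∀ k, (∫ y in Set.Ioc (-t) t, F k y)
      = t ^ (2 * k + 1) / (Nat.factorial (2 * k + 1) : ℝ)
        + t ^ (2 * k + 2) / (Nat.factorial (2 * k + 2) : ℝ) := by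
    intro k
    have hI : (∫ y in Set.Ioc (-t) t, F k y) = ∫ y in (-t)..t, F k y :=
      (intervalIntegral.integral_of_le htt).symm
    rw [hI]
    set c1 : ℝ := 1 / (2 * (4 ^ k * (Nat.factorial k : ℝ) ^ 2)) with hc1
    set c2 : ℝ := 1 / (4 * (4 ^ k * ((Nat.factorial k : ℝ) * (Nat.factorial (k + 1))))) with hc2
    have hdecomp : ∀ y : ℝ, F k y =
        (c1 + c2 * t) * (t ^ 2 - y ^ 2) ^ k + c2 * (y * (t ^ 2 - y ^ 2) ^ k) := by
      intro y
      rw [hF, hc1, hc2]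
      ring
    rw [intervalIntegral.integral_congr (fun y _ => hdecomp y)]
    rw [intervalIntegral.integral_add
        ((TG3.ii_pow t k (-t) t).const_mul _)
        (((Continuous.intervalIntegrable (by fun_prop) _ _) :
          IntervalIntegrable (fun y : ℝ => y * (t ^ 2 - y ^ 2) ^ k) volume (-t) t).const_mul _),
      intervalIntegral.integral_const_mul, intervalIntegral.integral_const_mul,
      TG3.Jodd t k, TG3.J_val t k]
    have hfk : (0:ℝ) < (Nat.factorial k : ℝ) := by exact_mod_cast Nat.factorial_pos k
    have hf21 : (0:ℝ) < (Nat.factorial (2 * k + 1) : ℝ) := by exact_mod_cast Nat.factorial_pos _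
    have e1 : 2 * k + 2 = (2 * k + 1) + 1 := by ring
    rw [hc1, hc2, e1, Nat.factorial_succ (2 * k + 1), Nat.factorial_succ k]
    push_cast
    field_simp
    ring
  -- sum the series
  have hexp : Real.exp t = ∑' n : ℕ, t ^ n / (Nat.factorial n : ℝ) := by
    rw [Real.exp_eq_exp_ℝ, NormedSpace.exp_eq_tsum_div]
  have hf : Summable fun n : ℕ => t ^ n / (Nat.factorial n : ℝ) :=
    Real.summable_pow_div_factorial t
  have hshift : Summable fun n : ℕ => t ^ (n + 1) / (Nat.factorial (n + 1) : ℝ) :=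
    (summable_nat_add_iff 1).2 hf
  have hodd : Summable fun k : ℕ => t ^ (2 * k + 1) / (Nat.factorial (2 * k + 1) : ℝ) :=
    hf.comp_injective (fun a b h => by omega)
  have heven : Summable fun k : ℕ => t ^ (2 * k + 2) / (Nat.factorial (2 * k + 2) : ℝ) :=
    hf.comp_injective (fun a b h => by omega)
  have step4 : ∑' k : ℕ, (t ^ (2 * k + 1) / (Nat.factorial (2 * k + 1) : ℝ)
      + t ^ (2 * k + 2) / (Nat.factorial (2 * k + 2) : ℝ)) = Real.exp t - 1 := by
    rw [hodd.tsum_add heven]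
    have h2 : (∑' k : ℕ, t ^ (2 * k + 1) / (Nat.factorial (2 * k + 1) : ℝ))
        + ∑' k : ℕ, t ^ (2 * k + 2) / (Nat.factorial (2 * k + 2) : ℝ)
        = ∑' n : ℕ, t ^ (n + 1) / (Nat.factorial (n + 1) : ℝ) := by
      have := tsum_even_add_odd (f := fun n : ℕ => t ^ (n + 1) / (Nat.factorial (n + 1) : ℝ))
        (by simpa using hodd) (by
          have : ∀ k : ℕ, t ^ (2 * k + 1 + 1) / (Nat.factorial (2 * k + 1 + 1) : ℝ)
              = t ^ (2 * k + 2) / (Nat.factorial (2 * k + 2) : ℝ) := fun k => rfl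
          simpa using heven)
      simpa using this
    rw [h2]
    have h3 := hf.tsum_eq_zero_add
    rw [hexp]
    simp only [pow_zero, Nat.factorial_zero, Nat.cast_one] at h3
    rw [h3]
    ring
  rw [step1, intervalIntegral.integral_of_le htt, step2, tsum_congr step3, step4]
  ring

end TG

end

/-- Boundary limits and normalization of the continuous part of the telegraph
density for `m = 1`. -/
theorem telegraph_gc_boundary_and_mass
    (g : ℝ → ℝ → ℝ)
    (hg : ∀ t y : ℝ, g t y =
      besselI0 (Real.sqrt (t ^ 2 - y ^ 2)) / 2 +
        (t + y) / (2 * Real.sqrt (t ^ 2 - y ^ 2)) * besselI1 (Real.sqrt (t ^ 2 - y ^ 2)))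
    (t : ℝ) (ht : 0 < t) :
    Filter.Tendsto (fun y : ℝ => g t y) (nhdsWithin t (Set.Iio t)) (nhds ((1 + t) / 2)) ∧
    Filter.Tendsto (fun y : ℝ => g t y) (nhdsWithin (-t) (Set.Ioi (-t))) (nhds (1 / 2)) ∧
    (∫ y in (-t)..t, g t y) + 1 = Real.exp t := by
  exact ⟨TG.limit_top ht g hg, TG.limit_bot ht g hg, TG.mass ht g hg⟩
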